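/- (Regression: exponential rate of directional convergence.) Consider the regression adversarial covariate-shift dynamic x_{t+1} = x_t + 2γ·⟨x_t, θ⋆ − θ⁰⟩·(θ⋆ − θ⁰) in a real Hilbert space with θ⋆ ≠ θ⁰, γ > 0, and x_0 satisfying ⟨x_0, θ⋆ − θ⁰⟩ ≠ 0. Then for every T ≥ 0, with Δ_b = (θ⋆ − θ⁰)/‖θ⋆ − θ⁰‖ and K = (‖x_0‖² − ⟨x_0, Δ_b⟩²)/⟨x_0, Δ_b⟩², one has 1 − K·e^{−cT} ≤ |⟨x_T/‖x_T‖, Δ_b⟩| ≤ 1, where c = 2·log(1 + 2γ‖θ⋆ − θ⁰‖²). -/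

import Mathlib

open scoped RealInnerProductSpace

private lemma aux_lower_bound (aT N r W : ℝ) (hr : 0 < r) (hW : 0 ≤ W)
    (hN : 0 < N) (hN2 : N ^ 2 = aT ^ 2 / r ^ 2 + W) :
    (aT ^ 2 - W * r ^ 2) * (N * r) ≤ |aT| * aT ^ 2 := by
  have hQ : 0 ≤ W * r ^ 2 := by positivity
  have hNr2 : (N * r) ^ 2 = aT ^ 2 + W * r ^ 2 := by
    rw [mul_pow, hN2]; field_simp
  rcases le_or_gt (aT ^ 2) (W * r ^ 2) with hc | hc
  · have h2 : (aT ^ 2 - W * r ^ 2) * (N * r) ≤ 0 :=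
      mul_nonpos_of_nonpos_of_nonneg (by linarith) (by positivity)
    have h3 : 0 ≤ |aT| * aT ^ 2 := by positivity
    linarith
  · have hkey : ((aT ^ 2 - W * r ^ 2) * (N * r)) ^ 2 ≤ (|aT| * aT ^ 2) ^ 2 := by
      have habs2 : (|aT| * aT ^ 2) ^ 2 = aT ^ 2 * aT ^ 2 * aT ^ 2 := by
        rw [mul_pow, sq_abs]; ring
      rw [habs2, mul_pow, hNr2]
      nlinarith [mul_nonneg hQ (sq_nonneg (aT ^ 2)),
        mul_nonneg (mul_nonneg hQ hQ) (sub_nonneg.mpr hc.le)]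
    have h1 : 0 ≤ (aT ^ 2 - W * r ^ 2) * (N * r) :=
      mul_nonneg (by linarith) (by positivity)
    have h2 : 0 ≤ |aT| * aT ^ 2 := by positivity
    calc (aT ^ 2 - W * r ^ 2) * (N * r)
        = Real.sqrt (((aT ^ 2 - W * r ^ 2) * (N * r)) ^ 2) := (Real.sqrt_sq h1).symm
      _ ≤ Real.sqrt ((|aT| * aT ^ 2) ^ 2) := Real.sqrt_le_sqrt hkey
      _ = |aT| * aT ^ 2 := Real.sqrt_sq h2

/-- Regression: exponential rate of directional convergence of the adversarial
covariate-shift dynamic to the blessing direction. -/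
theorem regression_directional_convergence_rate
    {H : Type*} [NormedAddCommGroup H] [InnerProductSpace ℝ H]
    (θs θ0 : H) (hne : θs ≠ θ0) (γ : ℝ) (hγ : 0 < γ)
    (x : ℕ → H)
    (hx : ∀ t : ℕ, x (t + 1) = x t + (2 * γ * ⟪x t, θs - θ0⟫) • (θs - θ0))
    (hx0 : ⟪x 0, θs - θ0⟫ ≠ 0) :
    ∀ T : ℕ,
      1 - (‖x 0‖ ^ 2 - ⟪x 0, ‖θs - θ0‖⁻¹ • (θs - θ0)⟫ ^ 2) /
            ⟪x 0, ‖θs - θ0‖⁻¹ • (θs - θ0)⟫ ^ 2 *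
          Real.exp (-(2 * Real.log (1 + 2 * γ * ‖θs - θ0‖ ^ 2) * T)) ≤
        |⟪‖x T‖⁻¹ • x T, ‖θs - θ0‖⁻¹ • (θs - θ0)⟫| ∧
      |⟪‖x T‖⁻¹ • x T, ‖θs - θ0‖⁻¹ • (θs - θ0)⟫| ≤ 1 := by
  set v : H := θs - θ0 with hv
  have hvne : v ≠ 0 := sub_ne_zero.mpr hne
  set r : ℝ := ‖v‖ with hrdef
  have hr : 0 < r := norm_pos_iff.mpr hvne
  have hrne : r ≠ 0 := hr.ne'
  set ρ : ℝ := 1 + 2 * γ * r ^ 2 with hρdef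
  have hρ : 1 < ρ := by
    have : 0 < 2 * γ * r ^ 2 := by positivity
    linarith
  have hρ0 : 0 < ρ := by linarith
  -- inner product recursion
  have ha : ∀ t : ℕ, ⟪x t, v⟫ = ρ ^ t * ⟪x 0, v⟫ := by
    intro t
    induction t with
    | zero => simp
    | succ t ih =>
      rw [hx t, inner_add_left, real_inner_smul_left, real_inner_self_eq_norm_sq, ih]
      ring
  have haT : ∀ t : ℕ, ⟪x t, v⟫ ≠ 0 := by
    intro t
    rw [ha t]
    exact mul_ne_zero (pow_ne_zero _ (by positivity)) hx0
  set W : ℝ := ‖x 0‖ ^ 2 - ⟪x 0, v⟫ ^ 2 / r ^ 2 with hWdef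
  have hW : 0 ≤ W := by
    have hcs : |⟪x 0, v⟫| ≤ ‖x 0‖ * r := by
      rw [hrdef]; exact abs_real_inner_le_norm _ _
    have h3 := mul_self_le_mul_self (abs_nonneg _) hcs
    rw [abs_mul_abs_self] at h3
    have h2 : ⟪x 0, v⟫ ^ 2 ≤ ‖x 0‖ ^ 2 * r ^ 2 := by nlinarith [norm_nonneg (x 0)]
    rw [hWdef, sub_nonneg, div_le_iff₀ (by positivity)]
    linarith
  -- norm recursion
  have hn : ∀ t : ℕ, ‖x t‖ ^ 2 = ⟪x t, v⟫ ^ 2 / r ^ 2 + W := by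
    intro t
    induction t with
    | zero => rw [hWdef]; ring
    | succ t ih =>
      have hrec : ‖x (t + 1)‖ ^ 2 =
          ‖x t‖ ^ 2 + 2 * ((2 * γ * ⟪x t, v⟫) * ⟪x t, v⟫) +
            (2 * γ * ⟪x t, v⟫) ^ 2 * r ^ 2 := by
        rw [hx t, norm_add_sq_real, real_inner_smul_right, norm_smul]
        rw [Real.norm_eq_abs, mul_pow, sq_abs]
      have hanext : ⟪x (t + 1), v⟫ = ρ * ⟪x t, v⟫ := by
        rw [hx t, inner_add_left, real_inner_smul_left, real_inner_self_eq_norm_sq]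
        ring
      rw [hrec, ih, hanext, hρdef]
      field_simp
      ring
  intro T
  set a : ℝ := ⟪x T, v⟫ with hadef
  have haTne : a ≠ 0 := haT T
  set N : ℝ := ‖x T‖ with hNdef
  have hN2 : N ^ 2 = a ^ 2 / r ^ 2 + W := hn T
  have hxTne : x T ≠ 0 := by
    intro h
    exact haTne (by rw [hadef, h, inner_zero_left])
  have hNpos : 0 < N := norm_pos_iff.mpr hxTne
  -- the inner product value
  have hval : ⟪‖x T‖⁻¹ • x T, ‖v‖⁻¹ • v⟫ = N⁻¹ * (r⁻¹ * a) := by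
    rw [real_inner_smul_left, real_inner_smul_right]
  have habs : |⟪‖x T‖⁻¹ • x T, ‖v‖⁻¹ • v⟫| = |a| / (N * r) := by
    rw [hval, abs_mul, abs_mul, abs_inv, abs_inv, abs_of_pos hNpos, abs_of_pos hr]
    field_simp
    all_goals ring
  constructor
  · -- lower bound
    have hK0 : ⟪x 0, ‖v‖⁻¹ • v⟫ = r⁻¹ * ⟪x 0, v⟫ := real_inner_smul_right _ _ _
    have hKsq : ⟪x 0, ‖v‖⁻¹ • v⟫ ^ 2 = ⟪x 0, v⟫ ^ 2 / r ^ 2 := by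
      rw [hK0]; field_simp
    have hexp : Real.exp (-(2 * Real.log ρ * T)) = (ρ ^ (2 * T))⁻¹ := by
      have h1 : Real.exp (2 * Real.log ρ * T) = ρ ^ (2 * T) := by
        rw [show (2 : ℝ) * Real.log ρ * T = ((2 * T : ℕ) : ℝ) * Real.log ρ by
          push_cast; ring]
        rw [Real.exp_nat_mul, Real.exp_log hρ0]
      rw [Real.exp_neg, h1]
    rw [habs, hKsq, hexp]
    have haa : a ^ 2 = ρ ^ (2 * T) * ⟪x 0, v⟫ ^ 2 := by
      rw [hadef, ha T, mul_pow, ← pow_mul]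
      ring_nf
    have hρT : (0 : ℝ) < ρ ^ (2 * T) := by positivity
    have hKe : (‖x 0‖ ^ 2 - ⟪x 0, v⟫ ^ 2 / r ^ 2) / (⟪x 0, v⟫ ^ 2 / r ^ 2) * (ρ ^ (2 * T))⁻¹
        = W * r ^ 2 / a ^ 2 := by
      have key : ∀ Wv rv iv Pv : ℝ, rv ≠ 0 → iv ≠ 0 → Pv ≠ 0 →
          Wv / (iv ^ 2 / rv ^ 2) * Pv⁻¹ = Wv * rv ^ 2 / (Pv * iv ^ 2) := by
        intro Wv rv iv Pv h1 h2 h3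
        field_simp
      rw [← hWdef, haa]
      exact key W r ⟪x 0, v⟫ (ρ ^ (2 * T)) hrne hx0 hρT.ne'
    rw [hKe]
    have ha2pos : (0 : ℝ) < a ^ 2 := by positivity
    have hfrac : (1 : ℝ) - W * r ^ 2 / a ^ 2 = (a ^ 2 - W * r ^ 2) / a ^ 2 := by
      field_simp
    rw [hfrac, div_le_div_iff₀ ha2pos (by positivity)]
    exact aux_lower_bound a N r W hr hW hNpos hN2
  · -- upper bound : Cauchy-Schwarz
    rw [habs, div_le_one (by positivity)]
    calc |a| ≤ ‖x T‖ * ‖v‖ := abs_real_inner_le_norm _ _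
      _ = N * r := rfl
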